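/- arXiv:1907.04562 — 5 statements merged into one kernel-verified Lean document; each statement's English description precedes it below -/
import Mathlib

section
/- Let n = v ⊕ z be a 2-step nilpotent metric Lie algebra with injective j, and B a symmetric endomorphism of z such that [j(z), j(Bz)] = 0 for all z ∈ z and j(Bz)j(z') − j(Bz')j(z) is skew-symmetric for all z,z' ∈ z. If n is irreducible, then B is a multiple of the identity. -/
open scoped RealInnerProductSpace

/-- Let `n = v ⊕ z` be a 2-step nilpotent metric Lie algebra with injective
`j`, and `B` a symmetric endomorphism of `z` with `[j(z), j(Bz)] = 0` for all `z ∈ z` and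
`j(Bz) j(z') − j(Bz') j(z)` skew-symmetric for all `z, z' ∈ z`.  If `n` is irreducible, then
`B` is a multiple of the identity. -/
theorem killing_stmt15 {n : Type*} [NormedAddCommGroup n] [InnerProductSpace ℝ n]
    [FiniteDimensional ℝ n]
    (l : n →ₗ[ℝ] n →ₗ[ℝ] n) (hanti : ∀ x : n, l x x = 0)
    (Z : Submodule ℝ n) (hZ : ∀ x : n, x ∈ Z ↔ ∀ y : n, l x y = 0)
    (h2 : ∀ x y : n, l x y ∈ Z) (hna : ∃ x : n, ∃ y : n, l x y ≠ 0)
    (j : n → n →ₗ[ℝ] n) (hj : ∀ z x y : n, ⟪j z x, y⟫ = ⟪z, l x y⟫)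
    (hjinj : ∀ z ∈ Z, j z = 0 → z = 0)
    -- irreducibility
    (hirr : ∀ N' N'' : Submodule ℝ n,
      (∀ x ∈ N', ∀ y : n, l x y ∈ N') → (∀ x ∈ N'', ∀ y : n, l x y ∈ N'') →
      (∀ x ∈ N', ∀ y ∈ N'', ⟪x, y⟫ = 0) → N' ⊔ N'' = ⊤ → N' = ⊥ ∨ N'' = ⊥)
    -- B is a symmetric endomorphism of z
    (B : n →ₗ[ℝ] n) (hBZ : ∀ z ∈ Z, B z ∈ Z)
    (hBsym : ∀ z ∈ Z, ∀ z' ∈ Z, ⟪B z, z'⟫ = ⟪z, B z'⟫)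
    -- (1): [j(z), j(Bz)] = 0
    (hBcomm : ∀ z ∈ Z, (j z) ∘ₗ (j (B z)) = (j (B z)) ∘ₗ (j z))
    -- (2): j(Bz) j(z') − j(Bz') j(z) is skew-symmetric
    (hBskw : ∀ z ∈ Z, ∀ z' ∈ Z, ∀ a b : n,
      ⟪((j (B z)) ∘ₗ (j z') - (j (B z')) ∘ₗ (j z)) a, b⟫ =
        -⟪a, ((j (B z)) ∘ₗ (j z') - (j (B z')) ∘ₗ (j z)) b⟫) :
    ∃ c : ℝ, ∀ z ∈ Z, B z = c • z := by
  classical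
  -- basic extensionality helper
  have ext0 : ∀ a : n, (∀ y : n, ⟪a, y⟫ = 0) → a = 0 := fun a h =>
    inner_self_eq_zero.mp (h a)
  have exteq : ∀ a b : n, (∀ y : n, ⟪a, y⟫ = ⟪b, y⟫) → a = b := by
    intro a b h
    have : a - b = 0 := ext0 _ (fun y => by rw [inner_sub_left, h, sub_self])
    exact sub_eq_zero.mp this
  -- antisymmetry of l
  have hl_anti : ∀ x y : n, l x y = -l y x := by
    intro x y
    have h := hanti (x + y)
    simp only [map_add, LinearMap.add_apply, hanti x, hanti y, zero_add, add_zero] at h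
    linear_combination (norm := module) h
  -- skewness of j z
  have hj_skew : ∀ z x y : n, ⟪j z x, y⟫ = -⟪x, j z y⟫ := by
    intro z x y
    have h1 : ⟪x, j z y⟫ = ⟪z, l y x⟫ := by rw [real_inner_comm]; exact hj z y x
    rw [hj, h1, hl_anti x y, inner_neg_right]
  -- additivity / homogeneity of j in z
  have hj_add : ∀ z z' : n, j (z + z') = j z + j z' := by
    intro z z'
    apply LinearMap.ext
    intro x
    apply exteq
    intro y
    simp only [LinearMap.add_apply, inner_add_left, hj, inner_add_left]
  have hj_smul : ∀ (c : ℝ) (z : n), j (c • z) = c • j z := by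
    intro c z
    apply LinearMap.ext
    intro x
    apply exteq
    intro y
    simp only [LinearMap.smul_apply, real_inner_smul_left, hj]
  have hj_zero : j (0 : n) = 0 := by
    have := hj_smul 0 0
    simpa using this
  -- range of j z is orthogonal to Z
  have hjz_perp : ∀ z x : n, ∀ c ∈ Z, ⟪j z x, c⟫ = 0 := by
    intro z x c hc
    rw [hj]
    have : l x c = 0 := by
      rw [hl_anti x c, (hZ c).mp hc x, neg_zero]
    rw [this, inner_zero_right]
  -- core lemma: for eigenvectors with distinct eigenvalues, j u ∘ j v = 0
  have hcore : ∀ (lam mu : ℝ), lam ≠ mu → ∀ u v : n, u ∈ Z → v ∈ Z →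
      B u = lam • u → B v = mu • v → ∀ b : n, j u (j v b) = 0 := by
    intro lam mu hne u v hu hv hBu hBv
    have hcomm : ∀ x : n, j u (j v x) = j v (j u x) := by
      intro x
      have h := LinearMap.congr_fun (hBcomm (u + v) (Z.add_mem hu hv)) x
      have hB : B (u + v) = lam • u + mu • v := by rw [map_add, hBu, hBv]
      rw [hB] at h
      simp only [hj_add, hj_smul, LinearMap.coe_comp, Function.comp_apply,
        LinearMap.add_apply, LinearMap.smul_apply, map_add, map_smul] at h
      have key : (mu - lam) • (j u (j v x)) = (mu - lam) • (j v (j u x)) := by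
        linear_combination (norm := module) h
      exact smul_right_injective n (sub_ne_zero.mpr (Ne.symm hne)) key
    intro b
    -- the operator S a = (lam - mu) • j u (j v a) is both symmetric and skew
    have hS : ∀ a b' : n,
        ⟪(lam - mu) • (j u (j v a)), b'⟫ = -⟪a, (lam - mu) • (j u (j v b'))⟫ := by
      intro a b'
      have h := hBskw u hu v hv a b'
      rw [hBu, hBv] at h
      simp only [hj_smul, LinearMap.sub_apply, LinearMap.coe_comp, Function.comp_apply,
        LinearMap.smul_apply] at h
      rw [← hcomm a, ← hcomm b', ← sub_smul, ← sub_smul] at h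
      exact h
    have hsym : ∀ a b' : n,
        ⟪(lam - mu) • (j u (j v a)), b'⟫ = ⟪a, (lam - mu) • (j u (j v b'))⟫ := by
      intro a b'
      rw [real_inner_smul_left, real_inner_smul_right]
      congr 1
      rw [hj_skew u (j v a) b', hj_skew v a (j u b'), neg_neg, hcomm b']
    have hzero : ∀ a : n, ⟪a, (lam - mu) • (j u (j v b))⟫ = 0 := by
      intro a
      have h1 := hS a b
      have h2 := hsym a b
      linarith
    have h3 : (lam - mu) • (j u (j v b)) = 0 := by
      have := hzero ((lam - mu) • (j u (j v b)))
      rwa [real_inner_self_eq_norm_sq, pow_eq_zero_iff (two_ne_zero), norm_eq_zero] at this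
    have hlm : lam - mu ≠ 0 := sub_ne_zero.mpr hne
    rcases smul_eq_zero.mp h3 with h | h
    · exact absurd h hlm
    · exact h
  -- the center is nontrivial
  obtain ⟨x₀, y₀, hxy⟩ := hna
  have hz₀ : l x₀ y₀ ∈ Z := h2 x₀ y₀
  -- restriction of B to Z
  set B' : Z →ₗ[ℝ] Z := B.restrict (fun x hx => hBZ x hx) with hB'def
  have hB'coe : ∀ w : Z, (B' w : n) = B w := by
    intro w
    simp [hB'def, LinearMap.restrict_coe_apply]
  have hB'sym : B'.IsSymmetric := by
    intro x y
    rw [Submodule.coe_inner, Submodule.coe_inner, hB'coe, hB'coe]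
    exact hBsym x x.2 y y.2
  have htop' : (⨆ μ : ℝ, Module.End.eigenspace B' μ) = ⊤ := by
    rw [← Submodule.orthogonal_eq_bot_iff]
    exact hB'sym.orthogonalComplement_iSup_eigenspaces_eq_bot
  -- existence of an eigenvalue
  have hex : ∃ lam : ℝ, Module.End.eigenspace B' lam ≠ ⊥ := by
    by_contra hcon
    push_neg at hcon
    have hbot : (⨆ μ : ℝ, Module.End.eigenspace B' μ) = ⊥ := by
      simp [hcon]
    rw [htop'] at hbot
    have : (⟨l x₀ y₀, hz₀⟩ : Z) ∈ (⊥ : Submodule ℝ Z) := hbot ▸ Submodule.mem_top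
    rw [Submodule.mem_bot] at this
    exact hxy (by simpa using congrArg (Submodule.subtype Z) this)
  obtain ⟨lam, hlam⟩ := hex
  obtain ⟨u₀, hu₀mem, hu₀ne⟩ := Submodule.exists_mem_ne_zero_of_ne_bot hlam
  -- K : the lam-eigenspace of B inside Z, as a submodule of n
  set K : Submodule ℝ n := Z ⊓ LinearMap.ker (B - lam • LinearMap.id) with hKdef
  have hKmem : ∀ z : n, z ∈ K ↔ z ∈ Z ∧ B z = lam • z := by
    intro z
    simp [hKdef, Submodule.mem_inf, LinearMap.mem_ker, LinearMap.sub_apply,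
      LinearMap.smul_apply, LinearMap.id_apply, sub_eq_zero]
  have heigK : ∀ w : Z, w ∈ Module.End.eigenspace B' lam → (w : n) ∈ K := by
    intro w hw
    rw [Module.End.mem_eigenspace_iff] at hw
    refine (hKmem _).mpr ⟨w.2, ?_⟩
    have := congrArg (Submodule.subtype Z) hw
    simpa [hB'coe] using this
  -- W' : sum of the other eigenspaces
  set W' : Submodule ℝ Z := ⨆ μ : {μ : ℝ // μ ≠ lam}, Module.End.eigenspace B' μ.val
    with hW'def
  have hW'prop : ∀ w : Z, w ∈ W' →
      ∀ u ∈ K, ⟪(w : n), u⟫ = 0 ∧ ∀ x : n, j (w : n) (j u x) = 0 := by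
    intro w hw
    refine Submodule.iSup_induction (motive := fun w : Z =>
      ∀ u ∈ K, ⟪(w : n), u⟫ = 0 ∧ ∀ x : n, j (w : n) (j u x) = 0) _ hw ?_ ?_ ?_
    · rintro ⟨μ, hμ⟩ w' hw' u hu
      rw [Module.End.mem_eigenspace_iff] at hw'
      have hBw' : B (w' : n) = μ • (w' : n) := by
        have := congrArg (Submodule.subtype Z) hw'
        simpa [hB'coe] using this
      obtain ⟨huZ, hBu⟩ := (hKmem u).mp hu
      constructor
      · have h1 : ⟪B (w' : n), u⟫ = ⟪(w' : n), B u⟫ := hBsym _ w'.2 u huZ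
        rw [hBw', hBu, real_inner_smul_left, real_inner_smul_right] at h1
        have : (μ - lam) * ⟪(w' : n), u⟫ = 0 := by ring_nf; linarith
        rcases mul_eq_zero.mp this with h | h
        · exact absurd (sub_eq_zero.mp h) hμ
        · exact h
      · exact hcore μ lam hμ (w' : n) u w'.2 huZ hBw' hBu
    · intro u hu
      simp [hj_zero]
    · intro a b ha hb u hu
      obtain ⟨ha1, ha2⟩ := ha u hu
      obtain ⟨hb1, hb2⟩ := hb u hu
      constructor
      · rw [Submodule.coe_add, inner_add_left, ha1, hb1, add_zero]
      · intro x
        rw [Submodule.coe_add, hj_add, LinearMap.add_apply, ha2 x, hb2 x, add_zero]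
  -- decomposition of Z
  have hZKW : ∀ z ∈ Z, ∃ a ∈ K, ∃ w : Z, w ∈ W' ∧ z = a + (w : n) := by
    intro z hz
    have hle : (⨆ μ : ℝ, Module.End.eigenspace B' μ) ≤
        Module.End.eigenspace B' lam ⊔ W' := by
      refine iSup_le fun μ => ?_
      by_cases hμ : μ = lam
      · subst hμ; exact le_sup_left
      · exact le_trans
          (le_iSup (fun ν : {ν : ℝ // ν ≠ lam} => Module.End.eigenspace B' ν.val) ⟨μ, hμ⟩)
          le_sup_right
    have hmem : (⟨z, hz⟩ : Z) ∈ Module.End.eigenspace B' lam ⊔ W' :=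
      hle (htop' ▸ Submodule.mem_top)
    obtain ⟨a, ha, w, hw, heq⟩ := Submodule.mem_sup.mp hmem
    refine ⟨(a : n), heigK a ha, w, hw, ?_⟩
    have := congrArg (Submodule.subtype Z) heq
    simpa using this.symm
  -- V₁ : sum of the ranges of j u, u ∈ K
  set V₁ : Submodule ℝ n := ⨆ u : K, LinearMap.range (j (u : n)) with hV₁def
  have hV₁perp : ∀ v ∈ V₁, ∀ c ∈ Z, ⟪v, c⟫ = 0 := by
    intro v hv
    refine Submodule.iSup_induction (motive := fun v : n => ∀ c ∈ Z, ⟪v, c⟫ = 0) _ hv ?_ ?_ ?_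
    · rintro u v ⟨x, rfl⟩ c hc
      exact hjz_perp _ x c hc
    · intro c hc; simp
    · intro a b ha hb c hc
      rw [inner_add_left, ha c hc, hb c hc, add_zero]
  have hV₁K : ∀ v ∈ V₁, ∀ y : n, l v y ∈ K := by
    intro v hv
    refine Submodule.iSup_induction (motive := fun v : n => ∀ y : n, l v y ∈ K) _ hv ?_ ?_ ?_
    · rintro u v ⟨x, rfl⟩ y
      have ht : l (j (u : n) x) y ∈ Z := h2 _ _
      obtain ⟨a, haK, w, hwW, heq⟩ := hZKW _ ht
      obtain ⟨hwa, -⟩ := hW'prop w hwW a haK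
      obtain ⟨-, hwj⟩ := hW'prop w hwW (u : n) u.2
      have hwt : ⟪(w : n), l (j (u : n) x) y⟫ = 0 := by
        rw [← hj, hwj x, inner_zero_left]
      have hw0 : (w : n) = 0 := by
        have : ⟪(w : n), (w : n)⟫ = 0 := by
          have h1 : ⟪(w : n), a + (w : n)⟫ = 0 := by rw [← heq]; exact hwt
          rw [inner_add_right, hwa] at h1
          linarith
        exact inner_self_eq_zero.mp this
      rw [heq, hw0, add_zero]
      exact haK
    · intro y; simp [K.zero_mem]
    · intro a b ha hb y
      rw [map_add, LinearMap.add_apply]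
      exact K.add_mem (ha y) (hb y)
  -- the two ideals
  set N₁ : Submodule ℝ n := K ⊔ V₁ with hN₁def
  have hKN₁ : K ≤ N₁ := le_sup_left
  have hV₁N₁ : V₁ ≤ N₁ := le_sup_right
  have hrangeV₁ : ∀ u : n, u ∈ K → ∀ y : n, j u y ∈ V₁ := by
    intro u hu y
    exact (le_iSup (fun u : K => LinearMap.range (j (u : n))) ⟨u, hu⟩)
      (LinearMap.mem_range_self _ y)
  have hcl1 : ∀ x ∈ N₁, ∀ y : n, l x y ∈ N₁ := by
    intro x hx y
    obtain ⟨a, haK, v, hvV, rfl⟩ := Submodule.mem_sup.mp hx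
    have haZ : a ∈ Z := ((hKmem a).mp haK).1
    have hla : l a y = 0 := (hZ a).mp haZ y
    rw [map_add, LinearMap.add_apply, hla, zero_add]
    exact hKN₁ (hV₁K v hvV y)
  have hcl2 : ∀ x ∈ N₁ᗮ, ∀ y : n, l x y ∈ N₁ᗮ := by
    intro x hx y
    rw [Submodule.mem_orthogonal]
    intro u hu
    obtain ⟨a, haK, v, hvV, rfl⟩ := Submodule.mem_sup.mp hu
    rw [inner_add_left]
    have h1 : ⟪a, l x y⟫ = 0 := by
      rw [← hj, hj_skew]
      have : ⟪x, j a y⟫ = 0 := by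
        rw [real_inner_comm]
        exact (Submodule.mem_orthogonal N₁ x).mp hx _ (hV₁N₁ (hrangeV₁ a haK y))
      rw [this, neg_zero]
    have h2' : ⟪v, l x y⟫ = 0 := hV₁perp v hvV _ (h2 x y)
    rw [h1, h2', add_zero]
  have hor : ∀ x ∈ N₁, ∀ y ∈ N₁ᗮ, ⟪x, y⟫ = 0 := by
    intro x hx y hy
    rw [real_inner_comm]
    exact (Submodule.mem_orthogonal' N₁ y).mp hy x hx
  have hsup : N₁ ⊔ N₁ᗮ = ⊤ := Submodule.sup_orthogonal_of_hasOrthogonalProjection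
  rcases hirr N₁ N₁ᗮ hcl1 hcl2 hor hsup with hbot | hbot
  · -- impossible : K would be trivial
    exfalso
    have hmem : (u₀ : n) ∈ N₁ := hKN₁ (heigK u₀ hu₀mem)
    rw [hbot, Submodule.mem_bot] at hmem
    exact hu₀ne (Subtype.coe_injective (by simpa using hmem))
  · -- N₁ = ⊤, so Z ⊆ K and B = lam • id on Z
    have hN₁top : N₁ = ⊤ := Submodule.orthogonal_eq_bot_iff.mp hbot
    refine ⟨lam, fun z hz => ?_⟩
    have hzN : z ∈ N₁ := hN₁top ▸ Submodule.mem_top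
    obtain ⟨a, haK, v, hvV, heq⟩ := Submodule.mem_sup.mp hzN
    have hv0 : v = 0 := by
      have h1 : ⟪v, z⟫ = 0 := hV₁perp v hvV z hz
      have h2' : ⟪v, a⟫ = 0 := hV₁perp v hvV a ((hKmem a).mp haK).1
      have : ⟪v, v⟫ = 0 := by
        have : ⟪v, a + v⟫ = 0 := by rw [heq]; exact h1
        rw [inner_add_right, h2'] at this
        linarith
      exact inner_self_eq_zero.mp this
    have hza : z = a := by rw [← heq, hv0, add_zero]
    rw [hza]
    exact ((hKmem a).mp haK).2
end

section
/- In the setting of the previous lemma (B symmetric on z with [j(z),j(Bz)] = 0 and j(Bz)j(z') − j(Bz')j(z) skew for all z,z'), if z and z' are eigenvectors of B with distinct eigenvalues λ ≠ μ, then j(z)j(z') = 0. -/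
open scoped RealInnerProductSpace

/-- In the setting of the previous lemma (`B` symmetric on `z`, with
`[j(z), j(Bz)] = 0` and `j(Bz) j(z') − j(Bz') j(z)` skew for all `z, z'`), if `z` and `z'`
are eigenvectors of `B` with distinct eigenvalues `λ ≠ μ`, then `j(z) j(z') = 0`. -/
theorem killing_stmt16 {n : Type*} [NormedAddCommGroup n] [InnerProductSpace ℝ n]
    [FiniteDimensional ℝ n]
    (l : n →ₗ[ℝ] n →ₗ[ℝ] n) (hanti : ∀ x : n, l x x = 0)
    (Z : Submodule ℝ n) (hZ : ∀ x : n, x ∈ Z ↔ ∀ y : n, l x y = 0)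
    (h2 : ∀ x y : n, l x y ∈ Z) (hna : ∃ x : n, ∃ y : n, l x y ≠ 0)
    (j : n → n →ₗ[ℝ] n) (hj : ∀ z x y : n, ⟪j z x, y⟫ = ⟪z, l x y⟫)
    (hjinj : ∀ z ∈ Z, j z = 0 → z = 0)
    (B : n →ₗ[ℝ] n) (hBZ : ∀ z ∈ Z, B z ∈ Z)
    (hBsym : ∀ z ∈ Z, ∀ z' ∈ Z, ⟪B z, z'⟫ = ⟪z, B z'⟫)
    (hBcomm : ∀ z ∈ Z, (j z) ∘ₗ (j (B z)) = (j (B z)) ∘ₗ (j z))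
    (hBskw : ∀ z ∈ Z, ∀ z' ∈ Z, ∀ a b : n,
      ⟪((j (B z)) ∘ₗ (j z') - (j (B z')) ∘ₗ (j z)) a, b⟫ =
        -⟪a, ((j (B z)) ∘ₗ (j z') - (j (B z')) ∘ₗ (j z)) b⟫)
    -- z, z' eigenvectors of B with distinct eigenvalues
    (z z' : n) (hz : z ∈ Z) (hz' : z' ∈ Z) (lam mu : ℝ)
    (hev : B z = lam • z) (hev' : B z' = mu • z') (hne : lam ≠ mu) :
    (j z) ∘ₗ (j z') = 0 := by

  -- `l` is antisymmetric
  have hanti2 : ∀ x y : n, l y x = - l x y := by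
    intro x y
    have h := hanti (x + y)
    simp only [map_add, LinearMap.add_apply, hanti, add_zero, zero_add] at h
    exact eq_neg_of_add_eq_zero_left h
  -- each j u is skew-adjoint
  have skew : ∀ u x y : n, ⟪j u x, y⟫ = -⟪x, j u y⟫ := by
    intro u x y
    have h' : (⟪x, (j u) y⟫ : ℝ) = ⟪u, l y x⟫ := by
      rw [← hj u y x]; exact real_inner_comm _ _
    rw [hj u x y, h', hanti2 x y, inner_neg_right, neg_neg]
  have jadd : ∀ u v : n, j (u + v) = j u + j v := by
    intro u v
    ext x
    apply ext_inner_right ℝ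
    intro y
    simp [hj, inner_add_left]
  have jsmul : ∀ (c : ℝ) (u : n), j (c • u) = c • j u := by
    intro c u
    ext x
    apply ext_inner_right ℝ
    intro y
    simp [hj, real_inner_smul_left]
  have hsum : z + z' ∈ Z := Z.add_mem hz hz'
  have hBsum : B (z + z') = lam • z + mu • z' := by rw [map_add, hev, hev']
  have h1 : ∀ x, j z (j z' x) = j z' (j z x) := by
    intro x
    have hc := hBcomm (z + z') hsum
    rw [hBsum, jadd, jadd, jsmul, jsmul] at hc
    have hcx := LinearMap.congr_fun hc x
    simp only [LinearMap.comp_apply, LinearMap.add_apply, LinearMap.smul_apply, map_add,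
      map_smul] at hcx
    have key : (mu - lam) • (j z (j z' x) - j z' (j z x)) = 0 := by
      linear_combination (norm := module) hcx
    rcases smul_eq_zero.mp key with h | h
    · exact absurd (by linarith : lam = mu) hne
    · exact sub_eq_zero.mp h
  have h2 : ∀ x, j z (j z' x) = - j z' (j z x) := by
    intro x
    apply ext_inner_right ℝ
    intro b
    have hs := hBskw z hz z' hz' x b
    rw [hev, hev', jsmul, jsmul] at hs
    simp only [LinearMap.sub_apply, LinearMap.comp_apply, LinearMap.smul_apply,
      inner_sub_left, inner_sub_right, real_inner_smul_left, real_inner_smul_right] at hs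
    have e1 : ⟪x, j z (j z' b)⟫ = ⟪j z' (j z x), b⟫ := by
      have a1 : ⟪j z x, j z' b⟫ = -⟪x, j z (j z' b)⟫ := skew z x (j z' b)
      have a2 : ⟪j z' (j z x), b⟫ = -⟪j z x, j z' b⟫ := skew z' (j z x) b
      linarith
    have e2 : ⟪x, j z' (j z b)⟫ = ⟪j z (j z' x), b⟫ := by
      have a1 : ⟪j z' x, j z b⟫ = -⟪x, j z' (j z b)⟫ := skew z' x (j z b)
      have a2 : ⟪j z (j z' x), b⟫ = -⟪j z' x, j z b⟫ := skew z (j z' x) b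
      linarith
    rw [e1, e2] at hs
    rw [inner_neg_left]
    have hlm : lam - mu ≠ 0 := sub_ne_zero.mpr hne
    have h3 : (lam - mu) * (⟪j z (j z' x), b⟫ + ⟪j z' (j z x), b⟫) = 0 := by ring_nf; linarith [hs]
    have := (mul_eq_zero.mp h3).resolve_left hlm
    linarith
  ext x
  have hx : j z (j z' x) = - j z (j z' x) := by
    calc j z (j z' x) = -(j z' (j z x)) := h2 x
      _ = -(j z (j z' x)) := by rw [h1 x]
  have hx2 : (2 : ℝ) • j z (j z' x) = 0 := by
    rw [two_smul]
    nth_rewrite 1 [hx]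
    exact neg_add_cancel _
  simpa using (smul_eq_zero.mp hx2).resolve_left two_ne_zero
end

section
/- An irreducible 2-step nilpotent metric Lie algebra n admits a non-zero Killing 3-form if and only if (1) j(z) is a Lie subalgebra of so(v), and (2) for each z ∈ z the map z' ↦ j⁻¹[j(z), j(z')] is skew-symmetric on z. In this case the space of Killing 3-forms on n is one-dimensional, spanned by j + γ₀ where γ₀(z,z') = 2 j⁻¹[j(z), j(z')]. -/
open scoped RealInnerProductSpace


theorem killing_scalar {n : Type*} [NormedAddCommGroup n] [InnerProductSpace ℝ n]
    [FiniteDimensional ℝ n]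
    (l : n →ₗ[ℝ] n →ₗ[ℝ] n) (hanti : ∀ x : n, l x x = 0)
    (Z : Submodule ℝ n) (hZ : ∀ x : n, x ∈ Z ↔ ∀ y : n, l x y = 0)
    (h2 : ∀ x y : n, l x y ∈ Z)
    (j : n → n →ₗ[ℝ] n) (hj : ∀ z x y : n, ⟪j z x, y⟫ = ⟪z, l x y⟫)
    (hirr : ∀ N' N'' : Submodule ℝ n,
      (∀ x ∈ N', ∀ y : n, l x y ∈ N') → (∀ x ∈ N'', ∀ y : n, l x y ∈ N'') →
      (∀ x ∈ N', ∀ y ∈ N'', ⟪x, y⟫ = 0) → N' ⊔ N'' = ⊤ → N' = ⊥ ∨ N'' = ⊥)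
    (B : n →ₗ[ℝ] n) (γ : n →ₗ[ℝ] n →ₗ[ℝ] n)
    (hBZ : ∀ z ∈ Z, B z ∈ Z) (hBsym : ∀ z ∈ Z, ∀ z' ∈ Z, ⟪B z, z'⟫ = ⟪z, B z'⟫)
    (hγ0 : ∀ z : n, γ z z = 0)
    (heq : ∀ z ∈ Z, ∀ z' ∈ Z,
      (j (B z)) ∘ₗ (j z') - (j (B z')) ∘ₗ (j z) +
        ((j z) ∘ₗ (j (B z')) - (j (B z')) ∘ₗ (j z)) = j (γ z z')) :
    ∃ c : ℝ, ∀ z ∈ Z, B z = c • z := by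
  classical
  have lskew : ∀ x y : n, l y x = - l x y := by
    intro x y
    have h := hanti (x + y)
    simp only [map_add, LinearMap.add_apply, hanti x, hanti y, zero_add, add_zero] at h
    exact eq_neg_of_add_eq_zero_left h
  have jadd : ∀ z w : n, j (z + w) = j z + j w := by
    intro z w; ext x
    refine ext_inner_right ℝ fun y => ?_
    simp only [LinearMap.add_apply, inner_add_left, hj, inner_add_left]
  have jsmul : ∀ (a : ℝ) (z : n), j (a • z) = a • j z := by
    intro a z; ext x
    refine ext_inner_right ℝ fun y => ?_
    simp only [LinearMap.smul_apply, hj, real_inner_smul_left]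
  have jskew : ∀ z x y : n, ⟪j z x, y⟫ = - ⟪x, j z y⟫ := by
    intro z x y
    have hx : (⟪x, j z y⟫ : ℝ) = ⟪z, l y x⟫ := by rw [real_inner_comm, hj]
    rw [hj, hx, lskew x y, inner_neg_right, neg_neg]
  have jcent : ∀ (z x : n), x ∈ Z → j z x = 0 := by
    intro z x hx
    refine ext_inner_right ℝ fun y => ?_
    rw [hj, (hZ x).1 hx y, inner_zero_left, inner_zero_right]
  -- spectral setup
  obtain ⟨m, hm⟩ : ∃ m, Module.finrank ℝ Z = m := ⟨_, rfl⟩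
  let T : Z →ₗ[ℝ] Z := B.restrict hBZ
  have hT : T.IsSymmetric := by
    intro u v
    have h := hBsym u u.2 v v.2
    simpa [T, Submodule.coe_inner, LinearMap.restrict_apply] using h
  let e := hT.eigenvectorBasis hm
  let μ := hT.eigenvalues hm
  let E : Fin m → n := fun i => (e i : n)
  have hEZ : ∀ i, E i ∈ Z := fun i => (e i).2
  have hBE : ∀ i, B (E i) = μ i • E i := by
    intro i
    have h := hT.apply_eigenvectorBasis hm i
    simp only [RCLike.ofReal_real_eq_id, id_eq] at h
    have h2' : ((T (e i) : Z) : n) = ((μ i • e i : Z) : n) := by rw [h]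
    simpa [T, LinearMap.restrict_coe_apply] using h2'
  have hEorth : ∀ i i', i ≠ i' → ⟪E i, E i'⟫ = 0 := by
    intro i i' hii
    have h := e.orthonormal.2 hii
    simpa [Submodule.coe_inner] using h
  have hEnz : ∀ i, E i ≠ 0 := by
    intro i h
    exact e.orthonormal.ne_zero i (by exact_mod_cast Subtype.coe_injective (h.trans rfl) )
  have hrepr : ∀ z, z ∈ Z → ∑ i, ⟪E i, z⟫ • E i = z := by
    intro z hz
    have h := e.sum_repr' ⟨z, hz⟩
    have h2' : ((∑ i, (⟪e i, (⟨z, hz⟩ : Z)⟫ : ℝ) • e i : Z) : n) = z := by rw [h]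
    simpa [Submodule.coe_inner] using h2'
  -- skew-symmetry helpers
  have S : ∀ w w' u v : n, ⟪j w (j w' u), v⟫ = ⟪j w' (j w v), u⟫ := by
    intro w w' u v
    rw [jskew, jskew, neg_neg, real_inner_comm]
  have Gsk : ∀ w u v : n, ⟪j w u, v⟫ = - ⟪j w v, u⟫ := by
    intro w u v
    rw [jskew, real_inner_comm]
  -- claim A : eigenvectors with distinct eigenvalues compose to zero
  have claimA : ∀ (z z' : n) (a b : ℝ), z ∈ Z → z' ∈ Z → B z = a • z → B z' = b • z' →
      a ≠ b → ∀ x, j z (j z' x) = 0 := by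
    intro z z' a b hz hz' hBa hBb hab x
    have hγanti : γ z' z = - γ z z' := by
      have h := hγ0 (z + z')
      simp only [map_add, LinearMap.add_apply, hγ0, zero_add, add_zero] at h
      exact eq_neg_of_add_eq_zero_left h
    have jneg : ∀ w : n, j (-w) = - j w := by
      intro w
      rw [← neg_one_smul ℝ w, jsmul, neg_one_smul]
    have heq1 := heq z hz z' hz'
    have heq2 := heq z' hz' z hz
    rw [hBa, hBb, jsmul, jsmul] at heq1 heq2
    rw [hγanti, jneg] at heq2
    have E1 : ∀ u v : n,
        (a + b) * ⟪j z (j z' u), v⟫ - 2 * b * ⟪j z' (j z u), v⟫ = ⟪j (γ z z') u, v⟫ := by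
      intro u v
      have h := congrArg (fun f : n →ₗ[ℝ] n => (⟪f u, v⟫ : ℝ)) heq1
      simp only [LinearMap.add_apply, LinearMap.sub_apply, LinearMap.coe_comp,
        Function.comp_apply, LinearMap.smul_apply, inner_add_left, inner_sub_left,
        real_inner_smul_left, map_smul] at h
      ring_nf at h ⊢
      linarith [h]
    have E2 : ∀ u v : n,
        (a + b) * ⟪j z' (j z u), v⟫ - 2 * a * ⟪j z (j z' u), v⟫ = - ⟪j (γ z z') u, v⟫ := by
      intro u v
      have h := congrArg (fun f : n →ₗ[ℝ] n => (⟪f u, v⟫ : ℝ)) heq2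
      simp only [LinearMap.add_apply, LinearMap.sub_apply, LinearMap.coe_comp,
        Function.comp_apply, LinearMap.smul_apply, LinearMap.neg_apply, inner_add_left,
        inner_sub_left, inner_neg_left, real_inner_smul_left, map_smul] at h
      ring_nf at h ⊢
      linarith [h]
    refine ext_inner_right ℝ fun y => ?_
    rw [inner_zero_left]
    have h1 := E2 x y
    have h2' := E1 y x
    rw [S z z' y x, S z' z y x, Gsk (γ z z') y x] at h2'
    -- h2' : (a+b) * ⟪j z' (j z x), y⟫ - 2*b*⟪j z (j z' x), y⟫ = -⟪j (γ z z') x, y⟫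
    have hfin : (2 * a - 2 * b) * ⟪j z (j z' x), y⟫ = 0 := by linarith
    have : (2 : ℝ) * a - 2 * b ≠ 0 := by
      intro hc; apply hab; linarith
    exact (mul_eq_zero.mp hfin).resolve_left this
  by_cases hall : ∀ i i' : Fin m, μ i = μ i'
  · -- all eigenvalues equal: B is scalar on Z
    refine ⟨if h : Nonempty (Fin m) then μ h.some else 0, ?_⟩
    intro z hz
    set c : ℝ := if h : Nonempty (Fin m) then μ h.some else 0 with hcdef
    have hc : ∀ i, μ i = c := by
      intro i
      rw [hcdef, dif_pos ⟨i⟩]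
      exact hall i _
    have hwZ : B z - c • z ∈ Z := sub_mem (hBZ z hz) (Z.smul_mem c hz)
    have hco : ∀ i, (⟪E i, B z - c • z⟫ : ℝ) = 0 := by
      intro i
      rw [inner_sub_right, real_inner_smul_right]
      rw [← hBsym (E i) (hEZ i) z hz, hBE i, real_inner_smul_left, hc i]
      ring
    have h0 : B z - c • z = 0 := by
      rw [← hrepr _ hwZ]
      exact Finset.sum_eq_zero fun i _ => by rw [hco i, zero_smul]
    have := sub_eq_zero.mp h0
    exact this
  · exfalso
    push_neg at hall
    obtain ⟨i₀, i₁, hne⟩ := hall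
    set lam := μ i₀ with hlam
    -- the composition of j's of eigenvectors with distinct eigenvalues vanishes
    have key0 : ∀ i i' : Fin m, μ i ≠ μ i' → ∀ x, j (E i) (j (E i') x) = 0 := by
      intro i i' hii x
      exact claimA (E i) (E i') (μ i) (μ i') (hEZ i) (hEZ i') (hBE i) (hBE i') hii x
    -- generating sets and submodules
    set gen : (Fin m → Prop) → Set n := fun P =>
      {x | ∃ i, P i ∧ x = E i} ∪ {x | ∃ i, P i ∧ ∃ v, x = j (E i) v} with hgen
    set NP : (Fin m → Prop) → Submodule ℝ n := fun P => Submodule.span ℝ (gen P) with hNP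
    have perp_span : ∀ (s : Set n) (y : n), (∀ x ∈ s, (⟪x, y⟫ : ℝ) = 0) →
        ∀ x ∈ Submodule.span ℝ s, (⟪x, y⟫ : ℝ) = 0 := by
      intro s y hs x hx
      induction hx using Submodule.span_induction with
      | mem u hu => exact hs u hu
      | zero => simp
      | add a b _ _ ha hb => rw [inner_add_left, ha, hb, add_zero]
      | smul c a _ ha => rw [real_inner_smul_left, ha, mul_zero]
    -- ideals
    have ideal : ∀ (P : Fin m → Prop), (∀ i i', P i → μ i = μ i' → P i') →
        ∀ x ∈ NP P, ∀ y : n, l x y ∈ NP P := by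
      intro P hP x hx y
      induction hx using Submodule.span_induction with
      | mem u hu =>
        rcases hu with hu | hu
        · obtain ⟨i, hi, rfl⟩ := hu
          rw [(hZ (E i)).1 (hEZ i) y]
          exact zero_mem _
        · obtain ⟨i, hi, v, rfl⟩ := hu
          have hwZ : l (j (E i) v) y ∈ Z := h2 _ _
          have hcoef : ∀ i', ¬ P i' → μ i' ≠ μ i → (⟪E i', l (j (E i) v) y⟫ : ℝ) = 0 := by
            intro i' _ hmu
            rw [← hj, key0 i' i hmu v, inner_zero_left]
          rw [← hrepr _ hwZ]
          refine Submodule.sum_mem _ fun i' _ => ?_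
          by_cases hPi' : P i'
          · exact Submodule.smul_mem _ _ (Submodule.subset_span (Or.inl ⟨i', hPi', rfl⟩))
          · by_cases hmu : μ i' = μ i
            · exact absurd (hP i i' hi hmu.symm) hPi'
            · rw [hcoef i' hPi' hmu, zero_smul]; exact zero_mem _
      | zero => simp only [map_zero, LinearMap.zero_apply]; exact zero_mem _
      | add a b _ _ ha hb => rw [map_add, LinearMap.add_apply]; exact add_mem ha hb
      | smul c a _ ha =>
        rw [map_smul, LinearMap.smul_apply]; exact Submodule.smul_mem _ _ ha
    -- orthogonality of complementary pieces
    have hEW : ∀ (z v w : n), w ∈ Z → (⟪j z v, w⟫ : ℝ) = 0 := by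
      intro z v w hw
      rw [Gsk, jcent z w hw, inner_zero_left, neg_zero]
    have gen_orth : ∀ (P : Fin m → Prop), ∀ x ∈ gen P, ∀ y ∈ gen fun i => ¬ P i,
        (∀ i i', P i → μ i = μ i' → P i') → (⟪x, y⟫ : ℝ) = 0 := by
      rintro P x (⟨i, hi, rfl⟩ | ⟨i, hi, v, rfl⟩) y (⟨i', hi', rfl⟩ | ⟨i', hi', w, rfl⟩) hP
      · refine hEorth i i' fun h => hi' ?_
        exact hP i i' hi (by rw [h])
      · rw [real_inner_comm]
        exact hEW _ _ _ (hEZ i)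
      · exact hEW _ _ _ (hEZ i')
      · rw [jskew, key0 i i' (fun h => hi' (hP i i' hi h)) w, inner_zero_right,
          neg_zero]
    have orth : ∀ (P : Fin m → Prop), (∀ i i', P i → μ i = μ i' → P i') →
        ∀ x ∈ NP P, ∀ y ∈ NP fun i => ¬ P i, (⟪x, y⟫ : ℝ) = 0 := by
      intro P hP x hx y hy
      have hx' : ∀ u ∈ gen fun i => ¬ P i, (⟪u, x⟫ : ℝ) = 0 := by
        intro u hu
        rw [real_inner_comm]
        exact perp_span (gen P) u (fun a ha => gen_orth P a ha u hu hP) x hx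
      rw [real_inner_comm]
      exact perp_span _ x hx' y hy
    -- the two submodules span everything
    have htop : ∀ (P : Fin m → Prop), NP P ⊔ NP (fun i => ¬ P i) = ⊤ := by
      intro P
      rw [← Submodule.orthogonal_eq_bot_iff]
      rw [Submodule.eq_bot_iff]
      intro x hx
      have hxperp : ∀ u ∈ NP P ⊔ NP fun i => ¬ P i, (⟪u, x⟫ : ℝ) = 0 :=
        fun u hu => (Submodule.mem_orthogonal _ x).1 hx u hu
      have hmemsup : ∀ i (v : n), j (E i) v ∈ NP P ⊔ NP fun i => ¬ P i := by
        intro i v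
        by_cases hPi : P i
        · exact Submodule.mem_sup_left (Submodule.subset_span (Or.inr ⟨i, hPi, v, rfl⟩))
        · exact Submodule.mem_sup_right (Submodule.subset_span (Or.inr ⟨i, hPi, v, rfl⟩))
      have hjEx : ∀ i, j (E i) x = 0 := by
        intro i
        refine ext_inner_right ℝ fun v => ?_
        rw [inner_zero_left, jskew, real_inner_comm, hxperp _ (hmemsup i v), neg_zero]
      have hjZx : ∀ z, z ∈ Z → j z x = 0 := by
        intro z hz
        rw [← hrepr z hz]
        have : j (∑ i, (⟪E i, z⟫ : ℝ) • E i) = ∑ i, (⟪E i, z⟫ : ℝ) • j (E i) := by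
          induction (Finset.univ : Finset (Fin m)) using Finset.induction with
          | empty =>
            simp only [Finset.sum_empty]
            have h0 := jsmul 0 0
            simpa using h0
          | insert _ _ hni ih =>
            rw [Finset.sum_insert hni, Finset.sum_insert hni, jadd, jsmul, ih]
        rw [this]
        simp only [LinearMap.coe_sum, Finset.sum_apply, LinearMap.smul_apply]
        exact Finset.sum_eq_zero fun i _ => by rw [hjEx i, smul_zero]
      have hxZ : x ∈ Z := by
        rw [hZ]
        intro y
        have h0 : (⟪l x y, l x y⟫ : ℝ) = 0 := by
          rw [← hj, hjZx _ (h2 x y), inner_zero_left]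
        exact inner_self_eq_zero.mp h0
      have hxmem : x ∈ NP P ⊔ NP fun i => ¬ P i := by
        rw [← hrepr x hxZ]
        refine Submodule.sum_mem _ fun i _ => Submodule.smul_mem _ _ ?_
        by_cases hPi : P i
        · exact Submodule.mem_sup_left (Submodule.subset_span (Or.inl ⟨i, hPi, rfl⟩))
        · exact Submodule.mem_sup_right (Submodule.subset_span (Or.inl ⟨i, hPi, rfl⟩))
      exact inner_self_eq_zero.mp (hxperp x hxmem)
    -- apply irreducibility
    set P : Fin m → Prop := fun i => μ i = lam with hP
    have hPsat : ∀ i i', P i → μ i = μ i' → P i' := by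
      intro i i' h1 h12; rw [hP]; dsimp only; rw [← h12]; exact h1
    have hPsat' : ∀ i i', ¬ P i → μ i = μ i' → ¬ P i' := by
      intro i i' h1 h12 hc; exact h1 (by rw [hP]; dsimp only; rw [h12]; exact hc)
    rcases hirr (NP P) (NP fun i => ¬ P i) (ideal P hPsat) (ideal _ hPsat')
        (orth P hPsat) (htop P) with hbot | hbot
    · have : E i₀ ∈ NP P := Submodule.subset_span (Or.inl ⟨i₀, rfl, rfl⟩)
      rw [hbot, Submodule.mem_bot] at this
      exact hEnz i₀ this
    · have : E i₁ ∈ NP fun i => ¬ P i :=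
        Submodule.subset_span (Or.inl ⟨i₁, fun h => hne h.symm, rfl⟩)
      rw [hbot, Submodule.mem_bot] at this
      exact hEnz i₁ this

/-- An irreducible 2-step nilpotent metric Lie algebra `n` admits a non-zero
Killing 3-form (i.e. a pair `α = j∘B + γ` with `B` symmetric on `z`, `γ ∈ Λ³z*`, satisfying
`j(Bz) j(z') − j(Bz') j(z) + [j(z), j(Bz')] = j(γ(z,z'))`) if and only if
(1) `j(z)` is a Lie subalgebra of `so(v)` and (2) for each `z ∈ z` the map
`z' ↦ j⁻¹[j z, j z']` lies in `so(z)`.  In this case the space of Killing 3-forms is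
one-dimensional, spanned by `j + γ₀` with `γ₀(z,z') = 2 j⁻¹[j z, j z']`. -/
theorem killing_stmt17 {n : Type*} [NormedAddCommGroup n] [InnerProductSpace ℝ n]
    [FiniteDimensional ℝ n]
    (l : n →ₗ[ℝ] n →ₗ[ℝ] n) (hanti : ∀ x : n, l x x = 0)
    (Z : Submodule ℝ n) (hZ : ∀ x : n, x ∈ Z ↔ ∀ y : n, l x y = 0)
    (h2 : ∀ x y : n, l x y ∈ Z) (hna : ∃ x : n, ∃ y : n, l x y ≠ 0)
    (j : n → n →ₗ[ℝ] n) (hj : ∀ z x y : n, ⟪j z x, y⟫ = ⟪z, l x y⟫)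
    (hjinj : ∀ z ∈ Z, j z = 0 → z = 0)
    (hirr : ∀ N' N'' : Submodule ℝ n,
      (∀ x ∈ N', ∀ y : n, l x y ∈ N') → (∀ x ∈ N'', ∀ y : n, l x y ∈ N'') →
      (∀ x ∈ N', ∀ y ∈ N'', ⟪x, y⟫ = 0) → N' ⊔ N'' = ⊤ → N' = ⊥ ∨ N'' = ⊥) :
    -- existence of a non-zero Killing 3-form ↔ conditions (1) and (2)
    ((∃ (B : n →ₗ[ℝ] n) (γ : n →ₗ[ℝ] n →ₗ[ℝ] n),
        (∀ z ∈ Z, B z ∈ Z) ∧ (∀ z ∈ Z, ∀ z' ∈ Z, ⟪B z, z'⟫ = ⟪z, B z'⟫) ∧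
        (∀ z ∈ Z, ∀ z' ∈ Z, γ z z' ∈ Z) ∧ (∀ z : n, γ z z = 0) ∧
        (∀ z ∈ Z, ∀ z' ∈ Z, ∀ z'' ∈ Z, ⟪γ z z', z''⟫ = -⟪γ z z'', z'⟫) ∧
        (∀ z ∈ Z, ∀ z' ∈ Z,
          (j (B z)) ∘ₗ (j z') - (j (B z')) ∘ₗ (j z) +
            ((j z) ∘ₗ (j (B z')) - (j (B z')) ∘ₗ (j z)) = j (γ z z')) ∧
        ¬((∀ z ∈ Z, B z = 0) ∧ (∀ z ∈ Z, ∀ z' ∈ Z, γ z z' = 0))) ↔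
      ((∀ z ∈ Z, ∀ z' ∈ Z, ∃ w ∈ Z, (j z) ∘ₗ (j z') - (j z') ∘ₗ (j z) = j w) ∧
        (∀ z ∈ Z, ∀ z' ∈ Z, ∀ z'' ∈ Z, ∀ w ∈ Z, ∀ w' ∈ Z,
          ((j z) ∘ₗ (j z') - (j z') ∘ₗ (j z) = j w) →
          ((j z) ∘ₗ (j z'') - (j z'') ∘ₗ (j z) = j w') →
          ⟪w, z''⟫ + ⟪z', w'⟫ = 0))) ∧
    -- in this case the space of Killing 3-forms is one-dimensional, spanned by j + γ₀
    ((∀ z ∈ Z, ∀ z' ∈ Z, ∃ w ∈ Z, (j z) ∘ₗ (j z') - (j z') ∘ₗ (j z) = j w) →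
      (∀ z ∈ Z, ∀ z' ∈ Z, ∀ z'' ∈ Z, ∀ w ∈ Z, ∀ w' ∈ Z,
        ((j z) ∘ₗ (j z') - (j z') ∘ₗ (j z) = j w) →
        ((j z) ∘ₗ (j z'') - (j z'') ∘ₗ (j z) = j w') →
        ⟪w, z''⟫ + ⟪z', w'⟫ = 0) →
      ∀ (B : n →ₗ[ℝ] n) (γ : n →ₗ[ℝ] n →ₗ[ℝ] n),
        (∀ z ∈ Z, B z ∈ Z) → (∀ z ∈ Z, ∀ z' ∈ Z, ⟪B z, z'⟫ = ⟪z, B z'⟫) →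
        (∀ z ∈ Z, ∀ z' ∈ Z, γ z z' ∈ Z) → (∀ z : n, γ z z = 0) →
        (∀ z ∈ Z, ∀ z' ∈ Z, ∀ z'' ∈ Z, ⟪γ z z', z''⟫ = -⟪γ z z'', z'⟫) →
        (∀ z ∈ Z, ∀ z' ∈ Z,
          (j (B z)) ∘ₗ (j z') - (j (B z')) ∘ₗ (j z) +
            ((j z) ∘ₗ (j (B z')) - (j (B z')) ∘ₗ (j z)) = j (γ z z')) →
        ∃ c : ℝ, (∀ z ∈ Z, B z = c • z) ∧
          (∀ z ∈ Z, ∀ z' ∈ Z,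
            j (γ z z') = (2 * c) • ((j z) ∘ₗ (j z') - (j z') ∘ₗ (j z)))) := by
  classical
  have jadd : ∀ z w : n, j (z + w) = j z + j w := by
    intro z w; ext x
    refine ext_inner_right ℝ fun y => ?_
    simp only [LinearMap.add_apply, inner_add_left, hj, inner_add_left]
  have jsmul : ∀ (a : ℝ) (z : n), j (a • z) = a • j z := by
    intro a z; ext x
    refine ext_inner_right ℝ fun y => ?_
    simp only [LinearMap.smul_apply, hj, real_inner_smul_left]
  have jzero : j 0 = 0 := by
    have h := jsmul 0 0
    simpa using h
  have jneg : ∀ w : n, j (-w) = - j w := by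
    intro w
    rw [← neg_one_smul ℝ w, jsmul, neg_one_smul]
  have juniq : ∀ w ∈ Z, ∀ w' ∈ Z, j w = j w' → w = w' := by
    intro w hw w' hw' h
    have hs : j (w - w') = 0 := by
      rw [sub_eq_add_neg, jadd, jneg, h]; abel
    exact sub_eq_zero.mp (hjinj _ (sub_mem hw hw') hs)
  -- the uniqueness statement (second bullet), proved once
  have bullet2 : ∀ (B : n →ₗ[ℝ] n) (γ : n →ₗ[ℝ] n →ₗ[ℝ] n),
      (∀ z ∈ Z, B z ∈ Z) → (∀ z ∈ Z, ∀ z' ∈ Z, ⟪B z, z'⟫ = ⟪z, B z'⟫) →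
      (∀ z : n, γ z z = 0) →
      (∀ z ∈ Z, ∀ z' ∈ Z,
        (j (B z)) ∘ₗ (j z') - (j (B z')) ∘ₗ (j z) +
          ((j z) ∘ₗ (j (B z')) - (j (B z')) ∘ₗ (j z)) = j (γ z z')) →
      ∃ c : ℝ, (∀ z ∈ Z, B z = c • z) ∧
        (∀ z ∈ Z, ∀ z' ∈ Z,
          j (γ z z') = (2 * c) • ((j z) ∘ₗ (j z') - (j z') ∘ₗ (j z))) := by
    intro B γ hBZ hBsym hγ0 heqK
    obtain ⟨c, hc⟩ := killing_scalar l hanti Z hZ h2 j hj hirr B γ hBZ hBsym hγ0 heqK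
    refine ⟨c, hc, ?_⟩
    intro z hz z' hz'
    have h := heqK z hz z' hz'
    rw [hc z hz, hc z' hz', jsmul, jsmul] at h
    rw [← h]
    ext x
    simp only [LinearMap.add_apply, LinearMap.sub_apply, LinearMap.coe_comp, Function.comp_apply,
      LinearMap.smul_apply, map_smul]
    module
  refine ⟨⟨?_, ?_⟩, ?_⟩
  · -- forward direction
    rintro ⟨B, γ, hBZ, hBsym, hγZ, hγ0, hγsk, heqK, hnt⟩
    obtain ⟨c, hc, hγeq⟩ := bullet2 B γ hBZ hBsym hγ0 heqK
    have hcne : c ≠ 0 := by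
      intro h0
      apply hnt
      constructor
      · intro z hz; rw [hc z hz, h0, zero_smul]
      · intro z hz z' hz'
        have h := hγeq z hz z' hz'
        rw [h0, mul_zero, zero_smul] at h
        have h' : j (γ z z') = j 0 := by rw [h, jzero]
        exact juniq _ (hγZ z hz z' hz') _ (zero_mem _) h'
    have h2c : (2 * c) ≠ 0 := by
      intro h; apply hcne; linarith
    constructor
    · intro z hz z' hz'
      refine ⟨(2 * c)⁻¹ • γ z z', Z.smul_mem _ (hγZ z hz z' hz'), ?_⟩
      rw [jsmul, hγeq z hz z' hz', smul_smul, inv_mul_cancel₀ h2c, one_smul]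
    · intro z hz z' hz' z'' hz'' w hw w' hw' he1 he2
      have hwid : w = (2 * c)⁻¹ • γ z z' := by
        refine juniq _ hw _ (Z.smul_mem _ (hγZ z hz z' hz')) ?_
        rw [← he1, jsmul, hγeq z hz z' hz', smul_smul, inv_mul_cancel₀ h2c, one_smul]
      have hwid' : w' = (2 * c)⁻¹ • γ z z'' := by
        refine juniq _ hw' _ (Z.smul_mem _ (hγZ z hz z'' hz'')) ?_
        rw [← he2, jsmul, hγeq z hz z'' hz'', smul_smul, inv_mul_cancel₀ h2c, one_smul]
      rw [hwid, hwid', real_inner_smul_left, real_inner_smul_right]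
      have hsk := hγsk z hz z' hz' z'' hz''
      have hcm : (⟪z', γ z z''⟫ : ℝ) = ⟪γ z z'', z'⟫ := real_inner_comm _ _
      rw [hcm, hsk]
      ring
  · -- backward direction: construct the Killing form
    rintro ⟨hc1, hc2⟩
    have hproj : ∀ x : n, ((Z.orthogonalProjectionOnto x : Z) : n) ∈ Z :=
      fun x => (Z.orthogonalProjectionOnto x).2
    set Pr : n → n := fun x => ((Z.orthogonalProjectionOnto x : Z) : n) with hPrdef
    have hPra : ∀ x y, Pr (x + y) = Pr x + Pr y := by
      intro x y; simp [hPrdef, map_add]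
    have hPrs : ∀ (a : ℝ) (x : n), Pr (a • x) = a • Pr x := by
      intro a x; simp [hPrdef, map_smul]
    have hPrid : ∀ z ∈ Z, Pr z = z := by
      intro z hz
      have h := Submodule.orthogonalProjectionOnto_mem_subspace_eq_self (K := Z) ⟨z, hz⟩
      simp only [hPrdef]
      rw [show (z : n) = ((⟨z, hz⟩ : Z) : n) from rfl, h]
    have hex : ∀ x y : n, ∃ w, w ∈ Z ∧
        (j (Pr x)) ∘ₗ (j (Pr y)) - (j (Pr y)) ∘ₗ (j (Pr x)) = j w := by
      intro x y
      obtain ⟨w, hw, hwe⟩ := hc1 (Pr x) (hproj x) (Pr y) (hproj y)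
      exact ⟨w, hw, hwe⟩
    set w0 : n → n → n := fun x y => (hex x y).choose with hw0
    have w0Z : ∀ x y, w0 x y ∈ Z := fun x y => (hex x y).choose_spec.1
    have w0eq : ∀ x y, (j (Pr x)) ∘ₗ (j (Pr y)) - (j (Pr y)) ∘ₗ (j (Pr x)) = j (w0 x y) :=
      fun x y => (hex x y).choose_spec.2
    have w0a1 : ∀ x x' y, w0 (x + x') y = w0 x y + w0 x' y := by
      intro x x' y
      refine juniq _ (w0Z _ _) _ (add_mem (w0Z x y) (w0Z x' y)) ?_
      rw [jadd, ← w0eq, ← w0eq, ← w0eq, hPra x x', jadd, LinearMap.add_comp,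
        LinearMap.comp_add]
      abel
    have w0s1 : ∀ (a : ℝ) (x y : n), w0 (a • x) y = a • w0 x y := by
      intro a x y
      refine juniq _ (w0Z _ _) _ (Z.smul_mem _ (w0Z x y)) ?_
      rw [jsmul, ← w0eq, ← w0eq, hPrs a x, jsmul, LinearMap.smul_comp, LinearMap.comp_smul,
        smul_sub]
    have w0a2 : ∀ x y y', w0 x (y + y') = w0 x y + w0 x y' := by
      intro x y y'
      refine juniq _ (w0Z _ _) _ (add_mem (w0Z x y) (w0Z x y')) ?_
      rw [jadd, ← w0eq, ← w0eq, ← w0eq, hPra y y', jadd, LinearMap.add_comp,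
        LinearMap.comp_add]
      abel
    have w0s2 : ∀ (a : ℝ) (x y : n), w0 x (a • y) = a • w0 x y := by
      intro a x y
      refine juniq _ (w0Z _ _) _ (Z.smul_mem _ (w0Z x y)) ?_
      rw [jsmul, ← w0eq, ← w0eq, hPrs a y, jsmul, LinearMap.smul_comp, LinearMap.comp_smul,
        smul_sub]
    set γm : n →ₗ[ℝ] n →ₗ[ℝ] n := LinearMap.mk₂ ℝ (fun x y => (2 : ℝ) • w0 x y)
      (fun x x' y => by
        show (2 : ℝ) • w0 (x + x') y = (2 : ℝ) • w0 x y + (2 : ℝ) • w0 x' y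
        rw [w0a1, smul_add])
      (fun a x y => by
        show (2 : ℝ) • w0 (a • x) y = a • ((2 : ℝ) • w0 x y)
        rw [w0s1, smul_comm])
      (fun x y y' => by
        show (2 : ℝ) • w0 x (y + y') = (2 : ℝ) • w0 x y + (2 : ℝ) • w0 x y'
        rw [w0a2, smul_add])
      (fun a x y => by
        show (2 : ℝ) • w0 x (a • y) = a • ((2 : ℝ) • w0 x y)
        rw [w0s2, smul_comm]) with hγm
    have hγmapp : ∀ x y, γm x y = (2 : ℝ) • w0 x y := fun x y => rfl
    have w0eq' : ∀ z, z ∈ Z → ∀ z', z' ∈ Z →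
        (j z) ∘ₗ (j z') - (j z') ∘ₗ (j z) = j (w0 z z') := by
      intro z hz z' hz'
      have h := w0eq z z'
      rw [hPrid z hz, hPrid z' hz'] at h
      exact h
    refine ⟨LinearMap.id, γm, ?_, ?_, ?_, ?_, ?_, ?_, ?_⟩
    · intro z hz; simpa using hz
    · intro z hz z' hz'; simp [real_inner_comm]
    · intro z hz z' hz'
      rw [hγmapp]
      exact Z.smul_mem _ (w0Z z z')
    · intro z
      rw [hγmapp]
      have h0 : w0 z z = 0 := by
        refine juniq _ (w0Z z z) _ (zero_mem _) ?_
        rw [← w0eq, jzero, sub_self]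
      rw [h0, smul_zero]
    · intro z hz z' hz' z'' hz''
      have hadd := hc2 z hz z' hz' z'' hz'' (w0 z z') (w0Z z z') (w0 z z'') (w0Z z z'')
        (w0eq' z hz z' hz') (w0eq' z hz z'' hz'')
      rw [hγmapp, hγmapp, real_inner_smul_left, real_inner_smul_left]
      have hcm : (⟪z', w0 z z''⟫ : ℝ) = ⟪w0 z z'', z'⟫ := real_inner_comm _ _
      rw [hcm] at hadd
      linarith
    · intro z hz z' hz'
      simp only [LinearMap.id_coe, id_eq]
      rw [hγmapp, jsmul, ← w0eq' z hz z' hz', two_smul]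
    · rintro ⟨hB0, -⟩
      obtain ⟨x, y, hxy⟩ := hna
      have h := hB0 (l x y) (h2 x y)
      simp only [LinearMap.id_coe, id_eq] at h
      exact hxy h
  · -- the uniqueness statement
    intro _ _ B γ hBZ hBsym hγZ hγ0 hγsk heqK
    exact bullet2 B γ hBZ hBsym hγ0 heqK
end

section
/- If (n,g) is a 2-step nilpotent metric Lie algebra with injective j satisfying the naturally reductive conditions (j(z) is a subalgebra of so(v) and z' ↦ j⁻¹[j(z),j(z')] is skew for each z), then the bracket [[z,z']] := j⁻¹([j(z), j(z')]) makes z into a Lie algebra whose inner product is invariant: g([[z,z']],z'') + g(z',[[z,z'']]) = 0, so (z, [[·,·]]) is a compact (metric) Lie algebra and j is a faithful representation. -/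
open scoped RealInnerProductSpace

/-- If `(n,g)` is a 2-step nilpotent metric Lie algebra with injective `j`
satisfying the naturally reductive conditions, then `[[z,z']] := j⁻¹[j z, j z']` makes `z`
into a Lie algebra (antisymmetric bracket satisfying the Jacobi identity) whose inner product
is ad-invariant: `g([[z,z']],z'') + g(z',[[z,z'']]) = 0`; thus `(z, [[·,·]])` is a compact
metric Lie algebra and `j` is a faithful representation.  The bracket is expressed through
witnesses: `w = [[z,z']]` means `j z ∘ j z' − j z' ∘ j z = j w` with `w ∈ z`. -/
theorem killing_stmt18 {n : Type*} [NormedAddCommGroup n] [InnerProductSpace ℝ n]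
    [FiniteDimensional ℝ n]
    (l : n →ₗ[ℝ] n →ₗ[ℝ] n) (hanti : ∀ x : n, l x x = 0)
    (Z : Submodule ℝ n) (hZ : ∀ x : n, x ∈ Z ↔ ∀ y : n, l x y = 0)
    (h2 : ∀ x y : n, l x y ∈ Z) (hna : ∃ x : n, ∃ y : n, l x y ≠ 0)
    (j : n → n →ₗ[ℝ] n) (hj : ∀ z x y : n, ⟪j z x, y⟫ = ⟪z, l x y⟫)
    (hjinj : ∀ z ∈ Z, j z = 0 → z = 0)
    -- naturally reductive condition (1): j(z) is a subalgebra of so(v)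
    (hsub : ∀ z ∈ Z, ∀ z' ∈ Z, ∃ w ∈ Z, (j z) ∘ₗ (j z') - (j z') ∘ₗ (j z) = j w)
    -- naturally reductive condition (2): z' ↦ j⁻¹[j z, j z'] is skew-symmetric
    (hskew : ∀ z ∈ Z, ∀ z' ∈ Z, ∀ z'' ∈ Z, ∀ w ∈ Z, ∀ w' ∈ Z,
      ((j z) ∘ₗ (j z') - (j z') ∘ₗ (j z) = j w) →
      ((j z) ∘ₗ (j z'') - (j z'') ∘ₗ (j z) = j w') →
      ⟪w, z''⟫ + ⟪z', w'⟫ = 0) :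
    -- the bracket [[·,·]] is antisymmetric
    (∀ z ∈ Z, ∀ z' ∈ Z, ∀ w ∈ Z, ∀ w' ∈ Z,
      ((j z) ∘ₗ (j z') - (j z') ∘ₗ (j z) = j w) →
      ((j z') ∘ₗ (j z) - (j z) ∘ₗ (j z') = j w') →
      w' = -w) ∧
    -- the bracket [[·,·]] satisfies the Jacobi identity
    (∀ z1 ∈ Z, ∀ z2 ∈ Z, ∀ z3 ∈ Z, ∀ w12 ∈ Z, ∀ w23 ∈ Z, ∀ w31 ∈ Z,
      ∀ u1 ∈ Z, ∀ u2 ∈ Z, ∀ u3 ∈ Z,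
      ((j z1) ∘ₗ (j z2) - (j z2) ∘ₗ (j z1) = j w12) →
      ((j z2) ∘ₗ (j z3) - (j z3) ∘ₗ (j z2) = j w23) →
      ((j z3) ∘ₗ (j z1) - (j z1) ∘ₗ (j z3) = j w31) →
      ((j z1) ∘ₗ (j w23) - (j w23) ∘ₗ (j z1) = j u1) →
      ((j z2) ∘ₗ (j w31) - (j w31) ∘ₗ (j z2) = j u2) →
      ((j z3) ∘ₗ (j w12) - (j w12) ∘ₗ (j z3) = j u3) →
      u1 + u2 + u3 = 0) ∧
    -- the inner product on z is invariant under the bracket [[·,·]]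
    (∀ z ∈ Z, ∀ z' ∈ Z, ∀ z'' ∈ Z, ∀ w ∈ Z, ∀ w' ∈ Z,
      ((j z) ∘ₗ (j z') - (j z') ∘ₗ (j z) = j w) →
      ((j z) ∘ₗ (j z'') - (j z'') ∘ₗ (j z) = j w') →
      ⟪w, z''⟫ + ⟪z', w'⟫ = 0) := by
  -- j is additive (as determined by hj and nondegeneracy of the inner product)
  have hadd : ∀ a b : n, j (a + b) = j a + j b := by
    intro a b
    ext x
    apply ext_inner_right ℝ
    intro y
    simp only [LinearMap.add_apply, inner_add_left, hj, inner_add_left]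
  have hneg : ∀ a : n, j (-a) = - j a := by
    intro a
    ext x
    apply ext_inner_right ℝ
    intro y
    simp only [LinearMap.neg_apply, inner_neg_left, hj, inner_neg_left]
  refine ⟨?_, ?_, ?_⟩
  · intro z hz z' hz' w hw w' hw' h1 h2'
    have hwz : w' + w ∈ Z := Z.add_mem hw' hw
    have hj0 : j (w' + w) = 0 := by
      rw [hadd, ← h1, ← h2']; abel
    exact eq_neg_of_add_eq_zero_left (hjinj _ hwz hj0)
  · intro z1 h1 z2 hh2 z3 h3 w12 hw12 w23 hw23 w31 hw31 u1 hu1 u2 hu2 u3 hu3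
      e12 e23 e31 f1 f2 f3
    have hsum : u1 + u2 + u3 ∈ Z := Z.add_mem (Z.add_mem hu1 hu2) hu3
    have hj0 : j (u1 + u2 + u3) = 0 := by
      rw [hadd, hadd, ← f1, ← f2, ← f3, ← e12, ← e23, ← e31]
      ext x
      simp only [LinearMap.add_apply, LinearMap.sub_apply, LinearMap.comp_apply,
        LinearMap.zero_apply, map_sub]
      abel
    exact hjinj _ hsum hj0
  · intro z hz z' hz' z'' hz'' w hw w' hw' e1 e2
    exact hskew z hz z' hz' z'' hz'' w hw w' hw' e1 e2
end

section
/- A de Rham irreducible 2-step nilpotent Riemannian Lie group cannot simultaneously admit a non-zero Killing 2-form and a non-zero Killing 3-form. At the Lie algebra level: if (n,g) is an irreducible 2-step nilpotent metric Lie algebra with injective j admitting an orthogonal bi-invariant complex structure J, then j(z) cannot be a Lie subalgebra of so(v) satisfying the naturally reductive condition (indeed, J anti-commutes with every j(z), forcing j(z) abelian, and then 0 = [j(z), j(Jz)] = −2 j(z)² J forces j = 0, a contradiction). -/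
open scoped RealInnerProductSpace

/-- A de Rham irreducible 2-step nilpotent Riemannian Lie group cannot
simultaneously admit a non-zero Killing 2-form and a non-zero Killing 3-form.  At the Lie
algebra level: if `(n,g)` is an irreducible 2-step nilpotent metric Lie algebra with injective
`j` admitting an orthogonal bi-invariant complex structure `J`, then `j(z)` cannot be a Lie
subalgebra of `so(v)` satisfying the naturally reductive condition. -/
theorem killing_stmt19 {n : Type*} [NormedAddCommGroup n] [InnerProductSpace ℝ n]
    [FiniteDimensional ℝ n]
    (l : n →ₗ[ℝ] n →ₗ[ℝ] n) (hanti : ∀ x : n, l x x = 0)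
    (Z : Submodule ℝ n) (hZ : ∀ x : n, x ∈ Z ↔ ∀ y : n, l x y = 0)
    (h2 : ∀ x y : n, l x y ∈ Z) (hna : ∃ x : n, ∃ y : n, l x y ≠ 0)
    (j : n → n →ₗ[ℝ] n) (hj : ∀ z x y : n, ⟪j z x, y⟫ = ⟪z, l x y⟫)
    (hjinj : ∀ z ∈ Z, j z = 0 → z = 0)
    (hirr : ∀ N' N'' : Submodule ℝ n,
      (∀ x ∈ N', ∀ y : n, l x y ∈ N') → (∀ x ∈ N'', ∀ y : n, l x y ∈ N'') →
      (∀ x ∈ N', ∀ y ∈ N'', ⟪x, y⟫ = 0) → N' ⊔ N'' = ⊤ → N' = ⊥ ∨ N'' = ⊥)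
    -- J is an orthogonal bi-invariant complex structure
    (J : n →ₗ[ℝ] n) (hJ2 : J ∘ₗ J = -LinearMap.id)
    (hJbi : ∀ x y : n, J (l x y) = l (J x) y)
    (hJorth : ∀ a b : n, ⟪J a, J b⟫ = ⟪a, b⟫) :
    -- the naturally reductive condition fails
    ¬((∀ z ∈ Z, ∀ z' ∈ Z, ∃ w ∈ Z, (j z) ∘ₗ (j z') - (j z') ∘ₗ (j z) = j w) ∧
      (∀ z ∈ Z, ∀ z' ∈ Z, ∀ z'' ∈ Z, ∀ w ∈ Z, ∀ w' ∈ Z,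
        ((j z) ∘ₗ (j z') - (j z') ∘ₗ (j z) = j w) →
        ((j z) ∘ₗ (j z'') - (j z'') ∘ₗ (j z) = j w') →
        ⟪w, z''⟫ + ⟪z', w'⟫ = 0)) := by
  rintro ⟨hNR1, -⟩
  -- helper: a = -a implies a = 0
  have half : ∀ a : n, a = -a → a = 0 := by
    intro a ha
    have h2 : (2:ℝ) • a = 0 := by
      rw [two_smul]
      nth_rewrite 2 [ha]
      simp
    rcases smul_eq_zero.mp h2 with h | h
    · norm_num at h
    · exact h
  -- l is skew-symmetric
  have hlskew : ∀ x y : n, l x y = -l y x := by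
    intro x y
    have h := hanti (x + y)
    simp only [map_add, LinearMap.add_apply, hanti x, hanti y, zero_add, add_zero] at h
    exact eq_neg_of_add_eq_zero_right h
  -- J squared is -1 pointwise
  have hJJ : ∀ x : n, J (J x) = -x := by
    intro x
    simpa using LinearMap.congr_fun hJ2 x
  -- the adjoint of J is -J
  have hJadj : ∀ a b : n, ⟪J a, b⟫ = -⟪a, J b⟫ := by
    intro a b
    have h := hJorth a (J b)
    rw [hJJ b, inner_neg_right] at h
    linarith
  -- l x (J y) = J (l x y)
  have hlJ : ∀ x y : n, l x (J y) = J (l x y) := by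
    intro x y
    rw [hlskew x (J y), ← hJbi y x, hlskew y x, map_neg, neg_neg]
  -- J ∘ j z = j (J z)
  have hjJ : ∀ z x : n, J (j z x) = j (J z) x := by
    intro z x
    apply ext_inner_right ℝ
    intro y
    rw [hj, hJadj ((j z) x) y, hj z x (J y), hlJ x y, hJadj z ((l x) y)]
  -- j z anticommutes with J
  have hanticom : ∀ z x : n, j z (J x) = -J (j z x) := by
    intro z x
    apply ext_inner_right ℝ
    intro y
    rw [hj, ← hJbi, inner_neg_left, hjJ, hj, hJadj, neg_neg]
  have hJj : ∀ z x : n, J (j z x) = -j z (J x) := by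
    intro z x
    rw [hanticom, neg_neg]
  -- jz is skew-symmetric
  have hskew : ∀ z x y : n, ⟪j z x, y⟫ = -⟪x, j z y⟫ := by
    intro z x y
    rw [hj, hlskew x y, inner_neg_right, ← hj z y x, real_inner_comm]
  -- Z is J-invariant
  have hZJ : ∀ z, z ∈ Z → J z ∈ Z := by
    intro z hz
    rw [hZ] at hz ⊢
    intro y
    rw [← hJbi, hz y, map_zero]
  -- j(Z) is abelian
  have habel : ∀ z ∈ Z, ∀ z' ∈ Z, ∀ x : n, j z (j z' x) = j z' (j z x) := by
    intro z hz z' hz'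
    obtain ⟨w, hw, heq⟩ := hNR1 z hz z' hz'
    have heq' : ∀ y : n, j w y = j z (j z' y) - j z' (j z y) := by
      intro y
      have h := LinearMap.congr_fun heq y
      simp only [LinearMap.sub_apply, LinearMap.comp_apply] at h
      rw [← h]
    -- J commutes with j w pointwise
    have hcomm : ∀ x : n, J (j w x) = j w (J x) := by
      intro x
      rw [heq' x, heq' (J x), map_sub, hJj z (j z' x), hJj z' (j z x),
        hJj z' x, hJj z x, map_neg, map_neg]
      abel
    -- but J also anticommutes with j w, so j w = 0
    have hwJ : ∀ x : n, j w (J x) = 0 := by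
      intro x
      apply half
      conv_lhs => rw [← hcomm x, hJj w x]
    have hw0 : j w = 0 := by
      ext x
      have hx : x = J (-(J x)) := by rw [map_neg, hJJ, neg_neg]
      rw [LinearMap.zero_apply, hx, hwJ]
    intro x
    have h := heq' x
    rw [hw0] at h
    simp only [LinearMap.zero_apply] at h
    exact sub_eq_zero.mp h.symm
  -- every element of Z is zero
  have hz0 : ∀ z ∈ Z, z = 0 := by
    intro z hz
    have hsq : ∀ x : n, j z (j z x) = 0 := by
      intro x
      have h := habel z hz (J z) (hZJ z hz) x
      rw [← hjJ z x, ← hjJ z (j z x)] at h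
      rw [hanticom z (j z x)] at h
      have hz' : J (j z (j z x)) = 0 := half _ h.symm
      have h2 := congrArg J hz'
      rw [hJJ, map_zero] at h2
      simpa using h2.symm
    have hjz : j z = 0 := by
      ext x
      have h := hskew z x (j z x)
      rw [hsq x, inner_zero_right, neg_zero] at h
      simpa using inner_self_eq_zero.mp h
    exact hjinj z hz hjz
  obtain ⟨x, y, hxy⟩ := hna
  exact hxy (hz0 (l x y) (h2 x y))
end
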